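/- Let μ > 0, κ > 2d, R > 0. Suppose X, Y are random vectors in ℝ^d with E[(|X|^κ + |Y|^κ)·1_{|X|+|Y| ≥ 2ρ}] ≤ N e^{-μρ²} for all ρ ≥ 2R (where N is a fixed constant), and E|X - Y|^κ ≤ N ρ^{d/2}|x-y|^{κ-d} + N e^{-μρ²} for all ρ ≥ 2R, for two points x, y ∈ B_R. Then E|X - Y|^κ ≤ N' |x - y|^{κ-2d} for a constant N' depending only on N, μ, R, d, κ. -/

import Mathlib

open MeasureTheory ENNReal

set_option maxHeartbeats 1000000 in
/-- Let `μ > 0`, `κ > 2d`, `R > 0`, `N ≥ 0`. If random vectors `X, Y` in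
`ℝ^d` satisfy `E[(|X|^κ + |Y|^κ) 1_{|X|+|Y| ≥ 2ρ}] ≤ N e^{-μρ²}` and
`E|X-Y|^κ ≤ N ρ^{d/2} |x-y|^{κ-d} + N e^{-μρ²}` for all `ρ ≥ 2R`, where `x, y ∈ B_R`,
then `E|X-Y|^κ ≤ N' |x-y|^{κ-2d}` with `N'` depending only on `N, μ, R, d, κ`. -/
theorem stmt13 (d : ℕ) (μ κ R N : ℝ) (hμ : 0 < μ) (hκ : 2 * d < κ) (hR : 0 < R)
    (hN : 0 ≤ N) :
    ∃ N' : ℝ, ∀ (Ω : Type) (_ : MeasurableSpace Ω) (P : Measure Ω),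
      IsProbabilityMeasure P →
      ∀ (X Y : Ω → EuclideanSpace ℝ (Fin d)), Measurable X → Measurable Y →
      ∀ (x y : EuclideanSpace ℝ (Fin d)), ‖x‖ ≤ R → ‖y‖ ≤ R →
      (∀ ρ : ℝ, 2 * R ≤ ρ →
        ∫⁻ ω in {ω | 2 * ρ ≤ ‖X ω‖ + ‖Y ω‖}, ENNReal.ofReal (‖X ω‖ ^ κ + ‖Y ω‖ ^ κ) ∂P
          ≤ ENNReal.ofReal (N * Real.exp (-μ * ρ ^ 2))) →
      (∀ ρ : ℝ, 2 * R ≤ ρ →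
        ∫⁻ ω, ENNReal.ofReal (‖X ω - Y ω‖ ^ κ) ∂P
          ≤ ENNReal.ofReal (N * ρ ^ ((d : ℝ) / 2) * ‖x - y‖ ^ (κ - d)
              + N * Real.exp (-μ * ρ ^ 2))) →
      ∫⁻ ω, ENNReal.ofReal (‖X ω - Y ω‖ ^ κ) ∂P
        ≤ ENNReal.ofReal (N' * ‖x - y‖ ^ (κ - 2 * d)) := by
  have hd0 : (0:ℝ) ≤ (d:ℝ) := Nat.cast_nonneg d
  have hc : (0:ℝ) < κ - 2 * d := by linarith
  have hκd : (0:ℝ) < κ - d := by linarith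
  set c : ℝ := κ - 2 * d with hc_def
  set δ : ℝ := Real.exp (-(μ * (2*R)^2)/c) with hδ_def
  have hδpos : 0 < δ := Real.exp_pos _
  set C₁ : ℝ := (c/μ) ^ ((d:ℝ)/4) with hC₁_def
  have hC₁0 : 0 ≤ C₁ := Real.rpow_nonneg (by positivity) _
  set B₀ : ℝ := N * (2*R) ^ ((d:ℝ)/2) * (2*R) ^ (κ - d) + N with hB₀_def
  have hB₀0 : 0 ≤ B₀ := by positivity
  have hδc : 0 < δ ^ c := Real.rpow_pos_of_pos hδpos c
  refine ⟨N * C₁ + N + B₀ / δ ^ c, ?_⟩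
  intro Ω _ P hP X Y hX hY x y hx hy h1 h2
  set r : ℝ := ‖x - y‖ with hr_def
  have hr0 : 0 ≤ r := norm_nonneg _
  have hr2R : r ≤ 2 * R := by
    have := norm_sub_le x y
    simp only [← hr_def] at this
    linarith
  have hrc0 : 0 ≤ r ^ c := Real.rpow_nonneg hr0 c
  rcases eq_or_lt_of_le hr0 with hr | hr
  · -- case r = 0 : the integral is 0
    have key : ∀ ρ : ℝ, 2*R ≤ ρ →
        ∫⁻ ω, ENNReal.ofReal (‖X ω - Y ω‖ ^ κ) ∂P
          ≤ ENNReal.ofReal (N * Real.exp (-μ * ρ ^ 2)) := by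
      intro ρ hρ
      refine (h2 ρ hρ).trans_eq ?_
      rw [← hr, Real.zero_rpow hκd.ne', mul_zero, zero_add]
    have ht1 : Filter.Tendsto (fun ρ : ℝ => -μ * ρ ^ 2) Filter.atTop Filter.atBot :=
      (Filter.tendsto_pow_atTop two_ne_zero).const_mul_atTop_of_neg (by linarith)
    have ht2 : Filter.Tendsto (fun ρ : ℝ => N * Real.exp (-μ * ρ ^ 2))
        Filter.atTop (nhds 0) := by
      have := (Real.tendsto_exp_atBot.comp ht1).const_mul N
      simpa using this
    have ht3 : Filter.Tendsto (fun ρ : ℝ => ENNReal.ofReal (N * Real.exp (-μ * ρ ^ 2)))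
        Filter.atTop (nhds 0) := by
      have := (ENNReal.continuous_ofReal.tendsto 0).comp ht2
      rw [ENNReal.ofReal_zero] at this
      exact this
    have hI : ∫⁻ ω, ENNReal.ofReal (‖X ω - Y ω‖ ^ κ) ∂P ≤ 0 :=
      ge_of_tendsto ht3 (Filter.eventually_atTop.2 ⟨2*R, key⟩)
    exact hI.trans zero_le
  · by_cases hcase : δ ≤ r
    · -- regime B: use ρ = 2R
      refine (h2 (2*R) le_rfl).trans (ENNReal.ofReal_le_ofReal ?_)
      have e1 : N * (2*R) ^ ((d:ℝ)/2) * r ^ (κ - d)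
          ≤ N * (2*R) ^ ((d:ℝ)/2) * (2*R) ^ (κ - d) := by
        have := Real.rpow_le_rpow hr0 hr2R hκd.le
        have hpos : 0 ≤ N * (2*R) ^ ((d:ℝ)/2) := by positivity
        exact mul_le_mul_of_nonneg_left this hpos
      have e2 : N * Real.exp (-μ * (2*R) ^ 2) ≤ N := by
        have h1' : Real.exp (-μ * (2*R) ^ 2) ≤ 1 :=
          Real.exp_le_one_iff.2 (by nlinarith [mul_nonneg hμ.le (sq_nonneg (2*R))])
        calc N * Real.exp (-μ * (2*R) ^ 2) ≤ N * 1 := mul_le_mul_of_nonneg_left h1' hN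
        _ = N := mul_one N
      have e3 : B₀ ≤ B₀ / δ ^ c * r ^ c := by
        have hδr : δ ^ c ≤ r ^ c := Real.rpow_le_rpow hδpos.le hcase hc.le
        calc B₀ = B₀ / δ ^ c * δ ^ c := by field_simp
        _ ≤ B₀ / δ ^ c * r ^ c :=
            mul_le_mul_of_nonneg_left hδr (by positivity)
      have e4 : B₀ / δ ^ c * r ^ c ≤ (N * C₁ + N + B₀ / δ ^ c) * r ^ c := by
        apply mul_le_mul_of_nonneg_right _ hrc0
        nlinarith
      calc N * (2*R) ^ ((d:ℝ)/2) * r ^ (κ - d) + N * Real.exp (-μ * (2*R) ^ 2)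
          ≤ B₀ := by rw [hB₀_def]; linarith
        _ ≤ (N * C₁ + N + B₀ / δ ^ c) * r ^ c := e3.trans e4
    · -- regime A: r < δ, choose ρ = sqrt(c * (-log r) / μ)
      push_neg at hcase
      have hlog : Real.log r < -(μ * (2*R)^2)/c := by
        have := Real.log_lt_log hr hcase
        rwa [hδ_def, Real.log_exp] at this
      have ht : 0 < -Real.log r := by
        have hneg : -(μ * (2*R)^2)/c < 0 := by
          apply div_neg_of_neg_of_pos _ hc
          have : 0 < μ * (2*R)^2 := by positivity
          linarith
        linarith
      set t : ℝ := -Real.log r with ht_def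
      have harg : 0 ≤ c * t / μ := by positivity
      set ρ : ℝ := Real.sqrt (c * t / μ) with hρ_def
      have hρ0 : 0 ≤ ρ := Real.sqrt_nonneg _
      have hρ2 : ρ ^ 2 = c * t / μ := Real.sq_sqrt harg
      have hρR : 2*R ≤ ρ := by
        have h4R : (2*R)^2 ≤ c * t / μ := by
          rw [le_div_iff₀ hμ]
          have hlc : Real.log r * c < -(μ * (2 * R) ^ 2) := (lt_div_iff₀ hc).1 hlog
          rw [ht_def]
          nlinarith
        calc 2*R = Real.sqrt ((2*R)^2) := (Real.sqrt_sq (by linarith)).symm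
        _ ≤ ρ := Real.sqrt_le_sqrt h4R
      have hexp : Real.exp (-μ * ρ ^ 2) = r ^ c := by
        rw [hρ2]
        have harg2 : -μ * (c * t / μ) = Real.log r * c := by
          field_simp [ht_def]
          ring
        rw [harg2, ← Real.rpow_def_of_pos hr]
      have hρd : ρ ^ ((d:ℝ)/2) ≤ C₁ * r ^ (-(d:ℝ)) := by
        have h1 : ρ ^ ((d:ℝ)/2) = (c * t / μ) ^ ((d:ℝ)/4) := by
          rw [hρ_def, Real.sqrt_eq_rpow, ← Real.rpow_mul harg]
          congr 1
          ring
        have h2' : (c * t / μ) ^ ((d:ℝ)/4) = C₁ * t ^ ((d:ℝ)/4) := by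
          rw [hC₁_def, ← Real.mul_rpow (by positivity) ht.le]
          congr 1
          ring
        have h3 : t ^ ((d:ℝ)/4) ≤ r ^ (-(d:ℝ)) := by
          have ha : t ≤ Real.exp t := by linarith [Real.add_one_le_exp t]
          calc t ^ ((d:ℝ)/4) ≤ (Real.exp t) ^ ((d:ℝ)/4) :=
                Real.rpow_le_rpow ht.le ha (by positivity)
          _ = Real.exp (t * ((d:ℝ)/4)) := (Real.exp_mul t ((d:ℝ)/4)).symm
          _ ≤ Real.exp (t * d) := by
                apply Real.exp_le_exp.2
                apply mul_le_mul_of_nonneg_left _ ht.le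
                linarith
          _ = r ^ (-(d:ℝ)) := by
                rw [Real.rpow_def_of_pos hr]
                congr 1
                rw [ht_def]
                ring
        calc ρ ^ ((d:ℝ)/2) = C₁ * t ^ ((d:ℝ)/4) := by rw [h1, h2']
        _ ≤ C₁ * r ^ (-(d:ℝ)) := mul_le_mul_of_nonneg_left h3 hC₁0
      refine (h2 ρ hρR).trans (ENNReal.ofReal_le_ofReal ?_)
      rw [hexp]
      have e1 : N * ρ ^ ((d:ℝ)/2) * r ^ (κ - d)
          ≤ N * (C₁ * r ^ (-(d:ℝ))) * r ^ (κ - d) := by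
        apply mul_le_mul_of_nonneg_right _ (Real.rpow_nonneg hr0 _)
        exact mul_le_mul_of_nonneg_left hρd hN
      have hsum : (-(d:ℝ)) + (κ - d) = c := by rw [hc_def]; ring
      have e2 : N * (C₁ * r ^ (-(d:ℝ))) * r ^ (κ - d) = N * C₁ * r ^ c := by
        calc N * (C₁ * r ^ (-(d:ℝ))) * r ^ (κ - d)
            = N * C₁ * (r ^ (-(d:ℝ)) * r ^ (κ - (d:ℝ))) := by ring
        _ = N * C₁ * r ^ ((-(d:ℝ)) + (κ - d)) := by rw [← Real.rpow_add hr]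
        _ = N * C₁ * r ^ c := by rw [hsum]

      have e3 : N * C₁ * r ^ c + N * r ^ c ≤ (N * C₁ + N + B₀ / δ ^ c) * r ^ c := by
        have h0 : 0 ≤ B₀ / δ ^ c := by positivity
        nlinarith [mul_nonneg h0 hrc0]
      calc N * ρ ^ ((d:ℝ)/2) * r ^ (κ - d) + N * r ^ c
          ≤ N * C₁ * r ^ c + N * r ^ c := by
            rw [← e2]
            linarith [e1]
        _ ≤ (N * C₁ + N + B₀ / δ ^ c) * r ^ c := e3
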